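/- Let $V$ be a complex Banach space, $\mathcal{A}=[K_{min},K_{max}]\subset(0,\infty)$, and $C_0, D>0$. Then there exists $C>0$ depending only on $\mathcal{A}$, $C_0$ and $D$ such that for every holomorphic function $g\colon B(0,K_{max})\to V$ with $\|g(0)\|\ge C_0$ and $\sup_{\omega\in B(0,K_{max})}\|g(\omega)\|\le D$, there exists $\omega\in\mathcal{A}$ with $\|g(\omega)\|\ge C$. -/

import Mathlib

open Metric Set Filter Topology

/-- Quantitative unique continuation for vector-valued holomorphic functions:
a uniform lower bound at `0` together with a uniform upper bound on the disc
forces a lower bound, uniform over all such `g`, at some frequency in `[Kmin, Kmax]`. -/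
theorem quantitative_unique_continuation
    (V : Type*) [NormedAddCommGroup V] [NormedSpace ℂ V] [CompleteSpace V]
    (Kmin Kmax C0 D : ℝ) (hKmin : 0 < Kmin) (hK : Kmin < Kmax)
    (hC0 : 0 < C0) (hD : 0 < D) :
    ∃ C > 0, ∀ g : ℂ → V,
      DifferentiableOn ℂ g (ball (0 : ℂ) Kmax) →
      C0 ≤ ‖g 0‖ →
      (∀ ω ∈ ball (0 : ℂ) Kmax, ‖g ω‖ ≤ D) →
      ∃ ω ∈ Icc Kmin Kmax, C ≤ ‖g (ω : ℂ)‖ := by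
  by_contra hcon
  push_neg at hcon
  -- for each `n`, pick a bad function `g n` witnessing failure of `C = 1/(n+1)`
  choose g hgdiff hg0 hgD hgsmall using fun n : ℕ =>
    hcon (1 / (n + 1)) (by positivity)
  -- reduce to scalar functions via Hahn-Banach
  have hgne : ∀ n, g n 0 ≠ 0 := by
    intro n h
    have := hg0 n
    rw [h, norm_zero] at this
    linarith
  choose φ hφ1 hφ2 using fun n => exists_dual_vector ℂ (g n 0) (norm_ne_zero_iff.mpr (hgne n))
  set f : ℕ → ℂ → ℂ := fun n z => φ n (g n z) with hf
  have hfle : ∀ n z, ‖f n z‖ ≤ ‖g n z‖ := by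
    intro n z
    calc ‖f n z‖ ≤ ‖φ n‖ * ‖g n z‖ := (φ n).le_opNorm _
    _ = ‖g n z‖ := by rw [hφ1 n, one_mul]
  have hfdiff : ∀ n, DifferentiableOn ℂ (f n) (ball (0 : ℂ) Kmax) := fun n =>
    (φ n).differentiable.comp_differentiableOn (hgdiff n)
  have hf0 : ∀ n, C0 ≤ ‖f n 0‖ := by
    intro n
    have : f n 0 = (‖g n 0‖ : ℂ) := hφ2 n
    rw [this]
    simpa using hg0 n
  have hfD : ∀ n, ∀ z ∈ ball (0 : ℂ) Kmax, ‖f n z‖ ≤ D := fun n z hz =>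
    (hfle n z).trans (hgD n z hz)
  -- key radii
  set Kmid : ℝ := (Kmin + Kmax) / 2 with hKmid
  set r : ℝ := (Kmin + 3 * Kmax) / 4 with hrdef
  have hr0 : 0 < r := by rw [hrdef]; linarith
  have hmidr : Kmid < r := by rw [hKmid, hrdef]; linarith
  have hminmid : Kmin < Kmid := by rw [hKmid]; linarith
  have hrK : r < Kmax := by rw [hrdef]; linarith
  set r' : NNReal := ⟨r, hr0.le⟩ with hr'
  have hr'r : (r' : ℝ) = r := rfl
  have hr'0 : (0 : NNReal) < r' := by
    rw [← NNReal.coe_lt_coe, hr'r]; exact hr0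
  clear_value r'
  clear_value r
  clear_value Kmid
  -- power series of `f n` on the ball of radius `r`
  have hball : closedBall (0 : ℂ) r' ⊆ ball (0 : ℂ) Kmax := by
    rw [hr'r]
    exact closedBall_subset_ball hrK
  have hps : ∀ n, HasFPowerSeriesOnBall (f n) (cauchyPowerSeries (f n) 0 r') 0 r' :=
    fun n => ((hfdiff n).mono hball).hasFPowerSeriesOnBall hr'0
  set c : ℕ → ℕ → ℂ := fun n k => (cauchyPowerSeries (f n) 0 r').coeff k with hc
  -- Cauchy estimates on the coefficients
  have hcoeff : ∀ n k, ‖c n k‖ ≤ D / r ^ k := by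
    intro n k
    have h1 : ‖c n k‖ ≤ ‖cauchyPowerSeries (f n) 0 r' k‖ := by
      have h := (cauchyPowerSeries (f n) 0 (r' : ℝ) k).le_opNorm (fun _ => (1 : ℂ))
      simp only [norm_one, Finset.prod_const_one, mul_one] at h
      exact h
    have hcont : ContinuousOn (fun θ : ℝ => ‖f n (circleMap 0 r' θ)‖) (uIcc 0 (2 * Real.pi)) := by
      apply ContinuousOn.norm
      apply ((hfdiff n).continuousOn.comp (continuous_circleMap 0 r').continuousOn)
      intro θ _
      simp only [mem_ball, Complex.dist_eq, sub_zero]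
      rw [norm_circleMap_zero, hr'r, abs_of_pos hr0]
      exact hrK
    have hint : ∫ θ : ℝ in (0)..2 * Real.pi, ‖f n (circleMap 0 r' θ)‖ ≤ 2 * Real.pi * D := by
      have h2 := intervalIntegral.integral_mono_on (μ := MeasureTheory.volume)
        (g := fun _ : ℝ => D) Real.two_pi_pos.le
        (hcont.intervalIntegrable) (intervalIntegrable_const) ?_
      · simpa using h2
      · intro θ _
        apply hfD
        simp only [mem_ball, Complex.dist_eq, sub_zero]
        rw [norm_circleMap_zero, hr'r, abs_of_pos hr0]
        exact hrK
    rw [hr'r] at hint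
    have h3 := norm_cauchyPowerSeries_le (f n) 0 r' k
    have h4 : ((2 * Real.pi)⁻¹ * ∫ θ : ℝ in (0)..2 * Real.pi, ‖f n (circleMap 0 r' θ)‖) *
        |(r' : ℝ)|⁻¹ ^ k ≤ D / r ^ k := by
      rw [hr'r, abs_of_pos hr0, div_eq_mul_inv, ← inv_pow]
      apply mul_le_mul_of_nonneg_right _ (by positivity)
      rw [inv_mul_le_iff₀ Real.two_pi_pos]
      linarith [hint]
    exact h1.trans (h3.trans h4)
  -- extract a convergent subsequence of coefficient sequences
  set s : Set (ℕ → ℂ) := Set.pi univ (fun k => closedBall (0 : ℂ) (D / r ^ k)) with hs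
  have hscomp : IsCompact s := isCompact_univ_pi fun k => isCompact_closedBall _ _
  have hmem : ∀ n, c n ∈ s := by
    intro n
    rw [hs, Set.mem_univ_pi]
    intro k
    rw [mem_closedBall_zero_iff]
    exact hcoeff n k
  obtain ⟨a, has, ψ, hψmono, hψtend⟩ := hscomp.isSeqCompact hmem
  have hak : ∀ k, ‖a k‖ ≤ D / r ^ k := by
    intro k
    have := has k (mem_univ k)
    rwa [mem_closedBall_zero_iff] at this
  have haktend : ∀ k, Tendsto (fun j => c (ψ j) k) atTop (𝓝 (a k)) :=
    fun k => (tendsto_pi_nhds.1 hψtend) k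
  -- the limit power series and limit function
  set q : FormalMultilinearSeries ℂ ℂ ℂ :=
    fun k => a k • ContinuousMultilinearMap.mkPiAlgebraFin ℂ k ℂ with hq
  have hqnorm : ∀ k, ‖q k‖ ≤ ‖a k‖ := by
    intro k
    show ‖a k • ContinuousMultilinearMap.mkPiAlgebraFin ℂ k ℂ‖ ≤ ‖a k‖
    refine (ContinuousMultilinearMap.opNorm_smul_le _ _).trans ?_
    rw [ContinuousMultilinearMap.norm_mkPiAlgebraFin, mul_one]
  have hqrad : (r' : ENNReal) ≤ q.radius := by
    apply q.le_radius_of_bound D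
    intro k
    rw [hr'r]
    calc ‖q k‖ * r ^ k ≤ ‖a k‖ * r ^ k :=
        mul_le_mul_of_nonneg_right (hqnorm k) (by positivity)
      _ ≤ (D / r ^ k) * r ^ k :=
        mul_le_mul_of_nonneg_right (hak k) (by positivity)
      _ = D := by field_simp
  have hqrad0 : (0 : ENNReal) < q.radius :=
    lt_of_lt_of_le (by exact_mod_cast hr'0) hqrad
  set F : ℂ → ℂ := q.sum with hF
  have hFps : HasFPowerSeriesOnBall F q 0 q.radius := q.hasFPowerSeriesOnBall hqrad0
  have hballmem : ∀ z : ℂ, ‖z‖ < r → z ∈ EMetric.ball (0 : ℂ) q.radius := by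
    intro z hz
    apply EMetric.ball_subset_ball hqrad
    rw [Metric.emetric_ball_nnreal]
    simp only [mem_ball, dist_zero_right]
    rw [hr'r]
    exact hz
  have hFan : AnalyticOnNhd ℂ F (ball (0 : ℂ) r) := by
    intro z hz
    apply hFps.analyticAt_of_mem
    apply hballmem
    simpa [mem_ball, Complex.dist_eq] using hz
  -- pointwise convergence `f (ψ j) z → F z` on the ball of radius `r`
  have hptwise : ∀ z : ℂ, ‖z‖ < r →
      Tendsto (fun j => f (ψ j) z) atTop (𝓝 (F z)) := by
    intro z hz
    have hzball : z ∈ Metric.eball (0 : ℂ) (r' : ENNReal) := by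
      rw [Metric.emetric_ball_nnreal]
      simp only [mem_ball, dist_zero_right]
      rw [hr'r]
      exact hz
    have hfnz : ∀ n, f n z = ∑' k, z ^ k • c n k := by
      intro n
      have h := (hps n).hasSum hzball
      simp only [zero_add] at h
      rw [← h.tsum_eq]
      congr 1
      ext k
      rw [FormalMultilinearSeries.apply_eq_pow_smul_coeff]
    have hFz : F z = ∑' k, z ^ k • a k := by
      rw [hF, FormalMultilinearSeries.sum]
      congr 1
      ext k
      rw [hq]
      simp [ContinuousMultilinearMap.mkPiAlgebraFin_apply, List.prod_ofFn, smul_eq_mul]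
      ring
    rw [hFz]
    simp only [hfnz]
    apply tendsto_tsum_of_dominated_convergence
      (bound := fun k => D * (‖z‖ / r) ^ k)
    · apply Summable.mul_left
      apply summable_geometric_of_lt_one (by positivity)
      rw [div_lt_one hr0]
      exact hz
    · intro k
      exact ((haktend k).const_smul (z ^ k))
    · filter_upwards with j k
      rw [norm_smul, norm_pow]
      calc ‖z‖ ^ k * ‖c (ψ j) k‖ ≤ ‖z‖ ^ k * (D / r ^ k) :=
          mul_le_mul_of_nonneg_left (hcoeff (ψ j) k) (by positivity)
        _ = D * (‖z‖ / r) ^ k := by rw [div_pow]; ring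
  -- the limit has norm ≥ C0 at 0
  have hF0 : C0 ≤ ‖F 0‖ := by
    have h0 : Tendsto (fun j => ‖f (ψ j) 0‖) atTop (𝓝 ‖F 0‖) :=
      (hptwise 0 (by simpa using hr0)).norm
    exact ge_of_tendsto h0 (Eventually.of_forall fun j => hf0 (ψ j))
  -- the limit vanishes on [Kmin, Kmid]
  have hFzero : ∀ x : ℝ, x ∈ Icc Kmin Kmid → F (x : ℂ) = 0 := by
    intro x hx
    have hxr : ‖(x : ℂ)‖ < r := by
      rw [Complex.norm_real, Real.norm_eq_abs, abs_of_pos (lt_of_lt_of_le hKmin hx.1)]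
      exact lt_of_le_of_lt hx.2 hmidr
    have h1 : Tendsto (fun j => f (ψ j) (x : ℂ)) atTop (𝓝 (F x)) := hptwise _ hxr
    have h2 : Tendsto (fun j => f (ψ j) (x : ℂ)) atTop (𝓝 0) := by
      rw [tendsto_zero_iff_norm_tendsto_zero]
      apply squeeze_zero (g := fun j => 1 / ((ψ j : ℝ) + 1)) (fun j => norm_nonneg _) ?_
        (tendsto_one_div_add_atTop_nhds_zero_nat.comp hψmono.tendsto_atTop)
      intro j
      apply (hfle _ _).trans
      apply le_of_lt
      exact hgsmall (ψ j) x ⟨hx.1, hx.2.trans (by rw [hKmid]; linarith)⟩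
    exact tendsto_nhds_unique h1 h2
  -- identity theorem: F ≡ 0 on the ball of radius r
  have hfreq : ∃ᶠ z in 𝓝[≠] ((Kmin : ℂ)), F z = 0 := by
    have htt : Tendsto (fun j : ℕ => ((Kmin + (Kmid - Kmin) / (j + 1) : ℝ) : ℂ)) atTop
        (𝓝[≠] ((Kmin : ℂ))) := by
      rw [tendsto_nhdsWithin_iff]
      constructor
      · have : Tendsto (fun j : ℕ => (Kmin + (Kmid - Kmin) / (j + 1) : ℝ)) atTop (𝓝 Kmin) := by
          have h := tendsto_one_div_add_atTop_nhds_zero_nat.const_mul (Kmid - Kmin)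
          simp only [mul_zero] at h
          have := h.const_add Kmin
          simp only [add_zero] at this
          convert this using 2 with j
          ring
        exact (Complex.continuous_ofReal.tendsto _).comp this
      · filter_upwards with j
        simp only [mem_compl_iff, mem_singleton_iff]
        intro h
        have h2 : (Kmin + (Kmid - Kmin) / (j + 1) : ℝ) = Kmin := by exact_mod_cast h
        have h3 : (Kmid - Kmin) / (j + 1 : ℝ) > 0 := by
          apply div_pos (by linarith) (by positivity)
        linarith
    apply htt.frequently
    apply Frequently.of_forall
    intro j
    apply hFzero
    constructor
    · have : (Kmid - Kmin) / (j + 1 : ℝ) > 0 := div_pos (by linarith) (by positivity)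
      linarith
    · have h1 : (Kmid - Kmin) / (j + 1 : ℝ) ≤ Kmid - Kmin := by
        apply div_le_self (by linarith)
        have : (0:ℝ) ≤ j := Nat.cast_nonneg j
        linarith
      linarith
  have hKminball : (Kmin : ℂ) ∈ ball (0 : ℂ) r := by
    simp only [mem_ball, Complex.dist_eq, sub_zero, Complex.norm_real, Real.norm_eq_abs]
    rw [abs_of_pos hKmin]
    linarith
  have hEq : EqOn F 0 (ball (0 : ℂ) r) :=
    hFan.eqOn_zero_of_preconnected_of_frequently_eq_zero
      (convex_ball _ _).isPreconnected hKminball hfreq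
  have h0ball : (0 : ℂ) ∈ ball (0 : ℂ) r := by simpa using hr0
  have : F 0 = 0 := hEq h0ball
  rw [this, norm_zero] at hF0
  linarith
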